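/- Under the 1-D Fanno system with M ≠ 1, the entropy function A = p/ρ^γ is constant: A' = 0 along the flow. -/

import Mathlib

theorem fanno_entropy_constant
    (γ μ L : ℝ) (hγ : 1 < γ) (hμ : 0 < μ)
    (ρ u p ρ' u' p' : ℝ → ℝ)
    (hρpos : ∀ x ∈ Set.Icc 0 L, 0 < ρ x)
    (hupos : ∀ x ∈ Set.Icc 0 L, 0 < u x)
    (hppos : ∀ x ∈ Set.Icc 0 L, 0 < p x)
    (hρ : ∀ x ∈ Set.Icc 0 L, HasDerivAt ρ (ρ' x) x)
    (hu : ∀ x ∈ Set.Icc 0 L, HasDerivAt u (u' x) x)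
    (hp : ∀ x ∈ Set.Icc 0 L, HasDerivAt p (p' x) x)
    (hM : ∀ x ∈ Set.Icc 0 L, ρ x * (u x) ^ 2 / (γ * p x) ≠ 1)
    (hmass : ∀ x ∈ Set.Icc 0 L, HasDerivAt (fun y => ρ y * u y) 0 x)
    (hmom : ∀ x ∈ Set.Icc 0 L,
      HasDerivAt (fun y => ρ y * (u y) ^ 2 + p y) (-(μ * ρ x * (u x) ^ 2)) x)
    (hener : ∀ x ∈ Set.Icc 0 L,
      HasDerivAt (fun y => ρ y * ((u y) ^ 2 / 2 + γ * p y / ((γ - 1) * ρ y)) * u y)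
        (-(μ * ρ x * (u x) ^ 3)) x) :
    ∀ x ∈ Set.Icc 0 L, HasDerivAt (fun y => p y / ρ y ^ γ) 0 x := by
  intro x hx
  have hρx := hρpos x hx
  have hux := hupos x hx
  have hpx := hppos x hx
  have hρne : ρ x ≠ 0 := ne_of_gt hρx
  have hγ1 : γ - 1 ≠ 0 := by linarith
  have hden : (γ - 1) * ρ x ≠ 0 := mul_ne_zero hγ1 hρne
  -- mass
  have e1 : ρ' x * u x + ρ x * u' x = 0 :=
    ((hρ x hx).mul (hu x hx)).unique (hmass x hx)
  -- momentum
  have e2 : ρ' x * u x ^ 2 + ρ x * (2 * u x ^ 1 * u' x) + p' x = -(μ * ρ x * u x ^ 2) :=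
    (((hρ x hx).mul ((hu x hx).pow 2)).add (hp x hx)).unique (hmom x hx)
  -- energy
  have hdiv : HasDerivAt (fun y => γ * p y / ((γ - 1) * ρ y))
      ((γ * p' x * ((γ - 1) * ρ x) - γ * p x * ((γ - 1) * ρ' x)) / ((γ - 1) * ρ x) ^ 2) x :=
    ((hp x hx).const_mul γ).div ((hρ x hx).const_mul (γ - 1)) hden
  have hsum : HasDerivAt (fun y => u y ^ 2 / 2 + γ * p y / ((γ - 1) * ρ y))
      (2 * u x ^ 1 * u' x / 2 +
        (γ * p' x * ((γ - 1) * ρ x) - γ * p x * ((γ - 1) * ρ' x)) / ((γ - 1) * ρ x) ^ 2) x :=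
    (((hu x hx).pow 2).div_const 2).add hdiv
  have e3 := (((hρ x hx).mul hsum).mul (hu x hx)).unique (hener x hx)
  -- key relation
  have hu' : u' x = -(ρ' x * u x) / ρ x := by
    field_simp
    linarith [e1]
  have hp' : p' x = ρ' x * u x ^ 2 - μ * ρ x * u x ^ 2 := by
    rw [hu'] at e2
    field_simp at e2
    nlinarith [e2, sq_nonneg (u x)]
  have key : p' x * ρ x = γ * p x * ρ' x := by
    rw [hu', hp', Pi.mul_apply] at e3
    field_simp at e3
    rw [hp']
    have hc : (0:ℝ) < 8 * u x * ρ x ^ 5 * (γ - 1) ^ 3 :=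
      mul_pos (mul_pos (mul_pos (by norm_num) hux) (pow_pos hρx 5)) (pow_pos (by linarith) 3)
    have key0 : 8 * u x * ρ x ^ 5 * (γ - 1) ^ 3 *
        ((ρ' x * u x ^ 2 - μ * ρ x * u x ^ 2) * ρ x - γ * p x * ρ' x) = 0 := by
      linear_combination (4 * u x * ρ x ^ 5 * (γ - 1) ^ 3) * e3
    rcases mul_eq_zero.mp key0 with h | h
    · exact absurd h (ne_of_gt hc)
    · linarith [sub_eq_zero.mp h]
  -- conclude
  have hpow : HasDerivAt (fun y => ρ y ^ γ) (ρ' x * γ * ρ x ^ (γ - 1)) x :=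
    (hρ x hx).rpow_const (Or.inl hρne)
  have hpowpos : (0:ℝ) < ρ x ^ γ := Real.rpow_pos_of_pos hρx γ
  have h := (hp x hx).div hpow (ne_of_gt hpowpos)
  refine h.congr_deriv (Eq.symm ?_)
  have hsplit : ρ x ^ γ = ρ x * ρ x ^ (γ - 1) := by
    nth_rewrite 1 [show γ = 1 + (γ - 1) by ring]
    rw [Real.rpow_add hρx, Real.rpow_one]
  rw [eq_comm, div_eq_zero_iff]
  left
  rw [hsplit]
  nlinarith [key, Real.rpow_pos_of_pos hρx (γ - 1)]
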